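/- Let P₆ = ⟨x, y | x⁶, y³, (xy)²⟩. The quotient of P₆ by the normal closure of the set {y x⁻², y⁻¹ x²} (its translation subgroup) is isomorphic to ℤ/6ℤ. -/

import Mathlib

/-- Relators of `P₆ = ⟨x, y | x⁶, y³, (xy)²⟩`, the fundamental group of `S²(2,3,6)`. -/
def relsP6 : Set (FreeGroup (Fin 2)) :=
  {(FreeGroup.of 0) ^ 6, (FreeGroup.of 1) ^ 3, (FreeGroup.of 0 * FreeGroup.of 1) ^ 2}

/-- `P₆ = ⟨x, y | x⁶, y³, (xy)²⟩`. -/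
abbrev P6 : Type := PresentedGroup relsP6

/-- The generator `x` of `P₆`. -/
def P6x : P6 := PresentedGroup.of 0

/-- The generator `y` of `P₆`. -/
def P6y : P6 := PresentedGroup.of 1

namespace Stmt10Aux

abbrev S : Set P6 := {P6y * (P6x * P6x)⁻¹, P6y⁻¹ * (P6x * P6x)}

abbrev N : Subgroup P6 := Subgroup.normalClosure S

abbrev Q : Type := P6 ⧸ N

abbrev M := Multiplicative (ZMod 6)

def fgen : Fin 2 → M := fun i => Multiplicative.ofAdd (if i = 0 then 1 else 2)

lemma hrels : ∀ r ∈ relsP6, FreeGroup.lift fgen r = 1 := by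
  intro r hr
  rcases hr with h | h | h <;> subst h <;> simp [fgen] <;> decide

def f : P6 →* M := PresentedGroup.toGroup hrels

lemma f_x : f P6x = Multiplicative.ofAdd 1 := by
  have := PresentedGroup.toGroup.of hrels (x := (0 : Fin 2))
  simpa [fgen, P6x, f] using this

lemma f_y : f P6y = Multiplicative.ofAdd 2 := by
  have := PresentedGroup.toGroup.of hrels (x := (1 : Fin 2))
  simpa [fgen, P6y, f] using this

lemma N_le_ker : N ≤ f.ker := by
  apply Subgroup.normalClosure_le_normal
  intro g hg
  rcases hg with h | h <;> subst h <;>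
    simp [MonoidHom.mem_ker, f_x, f_y, ← ofAdd_add] <;> decide

def F : Q →* M := QuotientGroup.lift N f N_le_ker

def xi : Q := QuotientGroup.mk' N P6x

lemma x_pow_six : (P6x : P6) ^ 6 = 1 := by
  have h1 : (P6x : P6) ^ 6 = PresentedGroup.mk relsP6 ((FreeGroup.of 0) ^ 6) := by
    rw [map_pow]; rfl
  have h2 : ((FreeGroup.of 0 : FreeGroup (Fin 2)) ^ 6) ∈ Subgroup.normalClosure relsP6 :=
    Subgroup.subset_normalClosure (by simp [relsP6])
  rw [h1]
  exact (QuotientGroup.eq_one_iff _).mpr h2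

lemma xi_pow_six : xi ^ 6 = 1 := by
  show (QuotientGroup.mk' N) P6x ^ 6 = 1
  rw [← map_pow, x_pow_six, map_one]

def gaux : ℤ →+ Additive Q := zmultiplesHom (Additive Q) (Additive.ofMul xi)

lemma gaux_six : gaux 6 = 0 := by
  show (6 : ℤ) • Additive.ofMul xi = 0
  rw [← ofMul_zpow, show ((6:ℤ)) = ((6:ℕ):ℤ) from rfl, zpow_natCast, xi_pow_six]
  rfl

def g : M →* Q := AddMonoidHom.toMultiplicativeLeft (ZMod.lift 6 ⟨gaux, gaux_six⟩)

lemma g_apply (a : ZMod 6) : g (Multiplicative.ofAdd a) = xi ^ a.val := by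
  have ha : ((a.val : ℤ) : ZMod 6) = a := by
    simp [ZMod.natCast_val, ZMod.cast_id]
  have h := ZMod.lift_coe (n := 6) ⟨gaux, gaux_six⟩ (a.val : ℤ)
  rw [ha] at h
  show Additive.toMul ((ZMod.lift 6 ⟨gaux, gaux_six⟩)
      (Multiplicative.toAdd (Multiplicative.ofAdd a))) = _
  rw [toAdd_ofAdd, h]
  show Additive.toMul ((a.val : ℤ) • Additive.ofMul xi) = _
  rw [← ofMul_zpow, toMul_ofMul, zpow_natCast]

lemma g_one : g (Multiplicative.ofAdd 1) = xi := by
  rw [g_apply]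
  have : (1 : ZMod 6).val = 1 := rfl
  rw [this, pow_one]

lemma Fg : F.comp g = MonoidHom.id M := by
  refine MonoidHom.ext fun m => ?_
  have hFxi : F xi = Multiplicative.ofAdd 1 := by
    simp [F, xi, f_x]
  have hg : g m = xi ^ (Multiplicative.toAdd m).val := by
    simpa using g_apply (Multiplicative.toAdd m)
  show F (g m) = m
  rw [hg, map_pow, hFxi, ← ofAdd_nsmul]
  have hv : (Multiplicative.toAdd m).val • (1 : ZMod 6) = Multiplicative.toAdd m := by
    simp [nsmul_eq_mul, ZMod.natCast_val, ZMod.cast_id]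
  rw [hv, ofAdd_toAdd]

lemma y_eq_xsq : (QuotientGroup.mk' N) P6y = (QuotientGroup.mk' N) (P6x * P6x) := by
  have h1 : (QuotientGroup.mk' N) (P6y * (P6x * P6x)⁻¹) = 1 := by
    rw [QuotientGroup.mk'_apply, QuotientGroup.eq_one_iff]
    exact Subgroup.subset_normalClosure (Or.inl rfl)
  have h2 : (QuotientGroup.mk' N) P6y * ((QuotientGroup.mk' N) (P6x * P6x))⁻¹ = 1 := by
    simpa using h1
  exact mul_inv_eq_one.mp h2

lemma gF : g.comp F = MonoidHom.id Q := by
  apply QuotientGroup.monoidHom_ext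
  apply PresentedGroup.ext
  intro i
  fin_cases i
  · show g (F ((QuotientGroup.mk' N) P6x)) = (QuotientGroup.mk' N) P6x
    have : F ((QuotientGroup.mk' N) P6x) = Multiplicative.ofAdd 1 := by simp [F, f_x]
    rw [this, g_one]; rfl
  · show g (F ((QuotientGroup.mk' N) P6y)) = (QuotientGroup.mk' N) P6y
    have hF : F ((QuotientGroup.mk' N) P6y) = Multiplicative.ofAdd 2 := by simp [F, f_y]
    rw [hF]
    have h2 : (Multiplicative.ofAdd (2 : ZMod 6)) = (Multiplicative.ofAdd (1 : ZMod 6)) ^ 2 := by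
      decide
    rw [h2, map_pow, g_one, y_eq_xsq]
    simp [xi, sq]

end Stmt10Aux

/-- The quotient of `P₆` by the normal closure of its translation subgroup,
generated by `t₁ = y x⁻²` and `t₂ = y⁻¹ x²`, is `ℤ/6ℤ`. -/
theorem stmt10 :
    Nonempty
      ((P6 ⧸ Subgroup.normalClosure
          ({P6y * (P6x * P6x)⁻¹, P6y⁻¹ * (P6x * P6x)} : Set P6))
        ≃* Multiplicative (ZMod 6)) := by
  exact ⟨MonoidHom.toMulEquiv Stmt10Aux.F Stmt10Aux.g Stmt10Aux.gF Stmt10Aux.Fg⟩
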